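/- Mass preservation under pushforward by a continuous open-dense defined map: let f : X ⇢ Y be continuous on a dense open set U ⊂ X, and let f_* be the induced pushforward on positive strong submeasures, f_*(μ)(φ) = inf{μ(ψ) : ψ ∈ C⁰(X), ψ ≥ f^*(φ)} where f^*(φ) is the USC extension of φ∘f from U. Then f_*(μ) is a positive strong submeasure on Y, f_*(μ)(±1) = μ(±1), and ‖f_*(μ)‖ = ‖μ‖. -/
import Mathlib


open Filter Topology
open scoped Classical

/-- A strong submeasure on a compact metric space `X`: a sublinear and bounded
functional on `C(X, ℝ)`. -/
def IsStrongSubmeasure {X : Type*} [TopologicalSpace X] [CompactSpace X] (μ : C(X, ℝ) → ℝ) : Prop :=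
  (∀ φ ψ : C(X, ℝ), μ (φ + ψ) ≤ μ φ + μ ψ) ∧
  (∀ c : ℝ, 0 ≤ c → ∀ φ : C(X, ℝ), μ (c • φ) = c * μ φ) ∧
  (∃ C : ℝ, 0 < C ∧ ∀ φ : C(X, ℝ), |μ φ| ≤ C * ‖φ‖)

/-- The canonical extension of a function from a dense open set `U` to `X`:
equal to the function on `U`, and to its `limsup` within `U` outside `U`. -/
noncomputable def usce {X : Type*} [TopologicalSpace X] (U : Set X) (g : X → ℝ) : X → ℝ :=
  fun x => if x ∈ U then g x else Filter.limsup g (nhdsWithin x U)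

/-- The upper-semicontinuous pullback `f^*(φ)` of a continuous function `φ` by a map `f`
continuous on the dense open set `U`: the USC extension of `φ ∘ f` from `U`. -/
noncomputable def uscPullback {X Y : Type*} [TopologicalSpace X] [TopologicalSpace Y]
    (U : Set X) (f : X → Y) (φ : C(Y, ℝ)) : X → ℝ :=
  usce U (fun x => φ (f x))

/-- The pushforward `f_*(μ)` of a functional `μ` on `C(X, ℝ)` by a continuous
open-dense defined map: `f_*(μ)(φ) = inf {μ(ψ) : ψ ∈ C⁰(X), ψ ≥ f^*(φ)}`. -/
noncomputable def pushSM {X Y : Type*} [TopologicalSpace X] [CompactSpace X]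
    [TopologicalSpace Y] [CompactSpace Y] (U : Set X) (f : X → Y)
    (μ : C(X, ℝ) → ℝ) (φ : C(Y, ℝ)) : ℝ :=
  sInf {c : ℝ | ∃ ψ : C(X, ℝ), (∀ x, uscPullback U f φ x ≤ ψ x) ∧ μ ψ = c}

section usceLemmas

variable {X : Type*} [TopologicalSpace X] {U : Set X} {g h : X → ℝ} {a b a' b' : ℝ}

lemma usce_aux_neBot (hUd : Dense U) (x : X) : (nhdsWithin x U).NeBot :=
  mem_closure_iff_nhdsWithin_neBot.1 (hUd x)

lemma usce_le_of_le (hUd : Dense U) (hga : ∀ x, a ≤ g x) (hgb : ∀ x, g x ≤ b) (x : X) :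
    usce U g x ≤ b := by
  unfold usce
  split_ifs with hx
  · exact hgb x
  · haveI := usce_aux_neBot hUd x
    exact limsup_le_of_le (isCoboundedUnder_le_of_le _ hga) (Eventually.of_forall hgb)

lemma le_usce_of_le (hUd : Dense U) (hga : ∀ x, a ≤ g x) (hgb : ∀ x, g x ≤ b) (x : X) :
    a ≤ usce U g x := by
  unfold usce
  split_ifs with hx
  · exact hga x
  · haveI := usce_aux_neBot hUd x
    exact le_limsup_of_frequently_le (Frequently.of_forall hga)
      (isBoundedUnder_of ⟨b, hgb⟩)

lemma usce_mono (hUd : Dense U) (hga : ∀ x, a ≤ g x) (hhb : ∀ x, h x ≤ b)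
    (hgh : ∀ x, g x ≤ h x) (x : X) : usce U g x ≤ usce U h x := by
  unfold usce
  split_ifs with hx
  · exact hgh x
  · haveI := usce_aux_neBot hUd x
    exact limsup_le_limsup (Eventually.of_forall hgh)
      (isCoboundedUnder_le_of_le _ hga) (isBoundedUnder_of ⟨b, hhb⟩)

lemma usce_add_le (hUd : Dense U) (hga : ∀ x, a ≤ g x) (hgb : ∀ x, g x ≤ b)
    (hha : ∀ x, a' ≤ h x) (hhb : ∀ x, h x ≤ b') (x : X) :
    usce U (fun y => g y + h y) x ≤ usce U g x + usce U h x := by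
  unfold usce
  split_ifs with hx
  · exact le_rfl
  · haveI := usce_aux_neBot hUd x
    have : (fun y => g y + h y) = g + h := rfl
    rw [this]
    exact limsup_add_le (isBoundedUnder_of ⟨a, hga⟩) (isBoundedUnder_of ⟨b, hgb⟩)
      (isCoboundedUnder_le_of_le _ hha) (isBoundedUnder_of ⟨b', hhb⟩)

lemma usce_const_mul (hUd : Dense U) {c : ℝ} (hc : 0 < c)
    (hga : ∀ x, a ≤ g x) (hgb : ∀ x, g x ≤ b) (x : X) :
    usce U (fun y => c * g y) x = c * usce U g x := by
  unfold usce
  split_ifs with hx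
  · rfl
  · haveI := usce_aux_neBot hUd x
    have := (OrderIso.mulLeft₀ c hc).limsup_apply (u := g) (f := nhdsWithin x U)
      (isBoundedUnder_of ⟨b, hgb⟩) (isCoboundedUnder_le_of_le _ hga)
      (isBoundedUnder_of ⟨c * b, fun y => by
        simp only [OrderIso.mulLeft₀_apply]
        exact mul_le_mul_of_nonneg_left (hgb y) hc.le⟩)
      (isCoboundedUnder_le_of_le _ (x := c * a) fun y => by
        simp only [OrderIso.mulLeft₀_apply]
        exact mul_le_mul_of_nonneg_left (hga y) hc.le)
    simp only [OrderIso.mulLeft₀_apply] at this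
    exact this.symm

lemma usce_const (hUd : Dense U) (a : ℝ) (x : X) : usce U (fun _ => a) x = a := by
  unfold usce
  split_ifs with hx
  · rfl
  · haveI := usce_aux_neBot hUd x
    exact limsup_const a

end usceLemmas

/-- Mass preservation under pushforward: for a continuous open-dense defined map
`f : X ⇢ Y` and a positive strong submeasure `μ` on `X`, `f_*(μ)` is a positive strong
submeasure on `Y`, `f_*(μ)(±1) = μ(±1)`, and `‖f_*(μ)‖ = ‖μ‖`. -/
theorem pushSM_positive_mass_preserving {X Y : Type*} [MetricSpace X] [CompactSpace X]
    [Nonempty X] [MetricSpace Y] [CompactSpace Y] (U : Set X) (hU : IsOpen U)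
    (hUd : Dense U) (f : X → Y) (hf : ContinuousOn f U)
    (μ : C(X, ℝ) → ℝ) (hμ : IsStrongSubmeasure μ) (hmono : Monotone μ) :
    IsStrongSubmeasure (pushSM U f μ) ∧ Monotone (pushSM U f μ) ∧
    pushSM U f μ 1 = μ 1 ∧ pushSM U f μ (-1) = μ (-1) ∧
    (∀ n : ℝ, IsLeast {C : ℝ | ∀ φ : C(X, ℝ), |μ φ| ≤ C * ‖φ‖} n →
      IsLeast {C : ℝ | ∀ φ : C(Y, ℝ), |pushSM U f μ φ| ≤ C * ‖φ‖} n) := by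
  classical
  obtain ⟨hsub, hhom, C, hCpos, hbd⟩ := hμ
  haveI : Nonempty Y := ⟨f (Classical.arbitrary X)⟩
  set P : C(Y, ℝ) → X → ℝ := uscPullback U f with hP
  set S : C(Y, ℝ) → Set ℝ :=
    fun φ => {c : ℝ | ∃ ψ : C(X, ℝ), (∀ x, P φ x ≤ ψ x) ∧ μ ψ = c} with hS
  have hpush : ∀ φ, pushSM U f μ φ = sInf (S φ) := fun φ => rfl
  -- basic bounds on the pullback
  have hglb : ∀ (φ : C(Y, ℝ)) (x : X), -‖φ‖ ≤ φ (f x) := by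
    intro φ x
    have := φ.norm_coe_le_norm (f x)
    rw [Real.norm_eq_abs] at this
    linarith [abs_le.1 this |>.1]
  have hgub : ∀ (φ : C(Y, ℝ)) (x : X), φ (f x) ≤ ‖φ‖ := by
    intro φ x
    have := φ.norm_coe_le_norm (f x)
    rw [Real.norm_eq_abs] at this
    exact (abs_le.1 this).2
  have hPub : ∀ (φ : C(Y, ℝ)) (x : X), P φ x ≤ ‖φ‖ := fun φ x =>
    usce_le_of_le hUd (hglb φ) (hgub φ) x
  have hPlb : ∀ (φ : C(Y, ℝ)) (x : X), -‖φ‖ ≤ P φ x := fun φ x =>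
    le_usce_of_le hUd (hglb φ) (hgub φ) x
  -- μ of zero and constants
  have hμ0 : μ 0 = 0 := by
    have := hhom 0 le_rfl 0
    simpa using this
  -- nonemptiness and boundedness of the defining sets
  have hne : ∀ φ, (S φ).Nonempty := by
    intro φ
    exact ⟨μ (ContinuousMap.const X ‖φ‖), ContinuousMap.const X ‖φ‖,
      fun x => hPub φ x, rfl⟩
  have hbdd : ∀ φ, BddBelow (S φ) := by
    intro φ
    refine ⟨μ (ContinuousMap.const X (-‖φ‖)), ?_⟩
    rintro c ⟨ψ, hψ, rfl⟩
    exact hmono (ContinuousMap.le_def.2 fun x => (hPlb φ x).trans (hψ x))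
  have push_le : ∀ (φ : C(Y, ℝ)) (ψ : C(X, ℝ)), (∀ x, P φ x ≤ ψ x) →
      pushSM U f μ φ ≤ μ ψ := by
    intro φ ψ hψ
    exact csInf_le (hbdd φ) ⟨ψ, hψ, rfl⟩
  have le_push : ∀ (φ : C(Y, ℝ)) (e : ℝ),
      (∀ ψ : C(X, ℝ), (∀ x, P φ x ≤ ψ x) → e ≤ μ ψ) → e ≤ pushSM U f μ φ := by
    intro φ e he
    refine le_csInf (hne φ) ?_
    rintro c ⟨ψ, hψ, rfl⟩
    exact he ψ hψ
  -- pushSM at a function whose pullback is (the coercion of) a continuous map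
  have push_eq : ∀ (φ : C(Y, ℝ)) (ψ₀ : C(X, ℝ)), (∀ x, P φ x = ψ₀ x) →
      pushSM U f μ φ = μ ψ₀ := by
    intro φ ψ₀ h
    refine le_antisymm (push_le φ ψ₀ fun x => (h x).le) (le_push φ _ ?_)
    intro ψ hψ
    exact hmono (ContinuousMap.le_def.2 fun x => (h x).symm.trans_le (hψ x))
  -- pullbacks of constants
  have hP1 : ∀ x, P 1 x = (1 : C(X, ℝ)) x := by
    intro x
    have : (fun z => (1 : C(Y, ℝ)) (f z)) = fun _ : X => (1 : ℝ) := by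
      funext z; simp
    simp only [hP, uscPullback, this]
    simpa using usce_const hUd 1 x
  have hPneg1 : ∀ x, P (-1) x = ((-1 : C(X, ℝ))) x := by
    intro x
    have : (fun z => (-1 : C(Y, ℝ)) (f z)) = fun _ : X => (-1 : ℝ) := by
      funext z; simp
    simp only [hP, uscPullback, this]
    simpa using usce_const hUd (-1) x
  have hpush1 : pushSM U f μ 1 = μ 1 := push_eq 1 1 hP1
  have hpushneg1 : pushSM U f μ (-1) = μ (-1) := push_eq (-1) (-1) hPneg1
  -- monotonicity
  have pmono : Monotone (pushSM U f μ) := by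
    intro φ φ' hφφ'
    rw [hpush, hpush]
    refine csInf_le_csInf (hbdd φ) (hne φ') ?_
    rintro c ⟨ψ, hψ, rfl⟩
    refine ⟨ψ, fun x => le_trans ?_ (hψ x), rfl⟩
    exact usce_mono hUd (hglb φ) (hgub φ') (fun z => hφφ' (f z)) x
  -- subadditivity
  have padd : ∀ φ φ' : C(Y, ℝ),
      pushSM U f μ (φ + φ') ≤ pushSM U f μ φ + pushSM U f μ φ' := by
    intro φ φ'
    have key : ∀ c₁ ∈ S φ, ∀ c₂ ∈ S φ', pushSM U f μ (φ + φ') ≤ c₁ + c₂ := by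
      rintro c₁ ⟨ψ₁, hψ₁, rfl⟩ c₂ ⟨ψ₂, hψ₂, rfl⟩
      have hle : ∀ x, P (φ + φ') x ≤ (ψ₁ + ψ₂) x := by
        intro x
        have h1 : (fun z => (φ + φ') (f z)) =
            fun z => φ (f z) + φ' (f z) := by funext z; simp
        have h2 : P (φ + φ') x ≤ P φ x + P φ' x := by
          simp only [hP, uscPullback, h1]
          exact usce_add_le hUd (hglb φ) (hgub φ) (hglb φ') (hgub φ') x
        calc P (φ + φ') x ≤ P φ x + P φ' x := h2
          _ ≤ ψ₁ x + ψ₂ x := add_le_add (hψ₁ x) (hψ₂ x)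
          _ = (ψ₁ + ψ₂) x := by simp
      exact (push_le (φ + φ') (ψ₁ + ψ₂) hle).trans (hsub ψ₁ ψ₂)
    have h1 : ∀ c₁ ∈ S φ, pushSM U f μ (φ + φ') - c₁ ≤ pushSM U f μ φ' := by
      intro c₁ hc₁
      rw [hpush φ']
      refine le_csInf (hne φ') fun c₂ hc₂ => ?_
      linarith [key c₁ hc₁ c₂ hc₂]
    rw [hpush φ]
    have h2 : pushSM U f μ (φ + φ') - pushSM U f μ φ' ≤ sInf (S φ) := by
      refine le_csInf (hne φ) fun c₁ hc₁ => ?_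
      linarith [h1 c₁ hc₁]
    linarith
  -- homogeneity
  have phalf : ∀ (c : ℝ), 0 < c → ∀ φ : C(Y, ℝ),
      pushSM U f μ (c • φ) ≤ c * pushSM U f μ φ := by
    intro c hc φ
    have key : ∀ ψ : C(X, ℝ), (∀ x, P φ x ≤ ψ x) →
        pushSM U f μ (c • φ) ≤ c * μ ψ := by
      intro ψ hψ
      have hle : ∀ x, P (c • φ) x ≤ (c • ψ) x := by
        intro x
        have h1 : (fun z => (c • φ) (f z)) = fun z => c * φ (f z) := by
          funext z; simp
        have h2 : P (c • φ) x = c * P φ x := by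
          simp only [hP, uscPullback, h1]
          exact usce_const_mul hUd hc (hglb φ) (hgub φ) x
        rw [h2]
        calc c * P φ x ≤ c * ψ x := mul_le_mul_of_nonneg_left (hψ x) hc.le
          _ = (c • ψ) x := by simp
      calc pushSM U f μ (c • φ) ≤ μ (c • ψ) := push_le _ _ hle
        _ = c * μ ψ := hhom c hc.le ψ
    have : pushSM U f μ (c • φ) / c ≤ pushSM U f μ φ := by
      refine le_push φ _ fun ψ hψ => ?_
      rw [div_le_iff₀ hc, mul_comm]
      exact key ψ hψ
    calc pushSM U f μ (c • φ) = c * (pushSM U f μ (c • φ) / c) := by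
          field_simp
      _ ≤ c * pushSM U f μ φ := mul_le_mul_of_nonneg_left this hc.le
  have phom : ∀ (c : ℝ), 0 ≤ c → ∀ φ : C(Y, ℝ),
      pushSM U f μ (c • φ) = c * pushSM U f μ φ := by
    intro c hc φ
    rcases eq_or_lt_of_le hc with h0 | hcpos
    · subst h0
      simp only [zero_smul, zero_mul]
      have hP0 : ∀ x, P 0 x = (0 : C(X, ℝ)) x := by
        intro x
        have : (fun z => (0 : C(Y, ℝ)) (f z)) = fun _ : X => (0 : ℝ) := by
          funext z; simp
        simp only [hP, uscPullback, this]
        simpa using usce_const hUd 0 x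
      rw [push_eq 0 0 hP0, hμ0]
    · refine le_antisymm (phalf c hcpos φ) ?_
      have := phalf c⁻¹ (inv_pos.2 hcpos) (c • φ)
      rw [smul_smul, inv_mul_cancel₀ hcpos.ne', one_smul] at this
      calc c * pushSM U f μ φ ≤ c * (c⁻¹ * pushSM U f μ (c • φ)) :=
            mul_le_mul_of_nonneg_left this hcpos.le
        _ = pushSM U f μ (c • φ) := by field_simp
  -- bounds: ‖φ‖ * μ(-1) ≤ pushSM φ ≤ ‖φ‖ * μ(1)
  have pub : ∀ φ : C(Y, ℝ), pushSM U f μ φ ≤ ‖φ‖ * μ 1 := by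
    intro φ
    have h : ∀ x, P φ x ≤ (‖φ‖ • (1 : C(X, ℝ))) x := by
      intro x; simpa using hPub φ x
    calc pushSM U f μ φ ≤ μ (‖φ‖ • 1) := push_le _ _ h
      _ = ‖φ‖ * μ 1 := hhom _ (norm_nonneg φ) 1
  have plb : ∀ φ : C(Y, ℝ), ‖φ‖ * μ (-1) ≤ pushSM U f μ φ := by
    intro φ
    refine le_push φ _ fun ψ hψ => ?_
    have h : (‖φ‖ • (-1 : C(X, ℝ))) ≤ ψ := by
      refine ContinuousMap.le_def.2 fun x => ?_
      have : (‖φ‖ • (-1 : C(X, ℝ))) x = -‖φ‖ := by simp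
      rw [this]
      exact (hPlb φ x).trans (hψ x)
    calc ‖φ‖ * μ (-1) = μ (‖φ‖ • (-1)) := (hhom _ (norm_nonneg φ) (-1)).symm
      _ ≤ μ ψ := hmono h
  have habsbound : ∀ (D : ℝ), |μ 1| ≤ D → |μ (-1)| ≤ D →
      ∀ φ : C(Y, ℝ), |pushSM U f μ φ| ≤ D * ‖φ‖ := by
    intro D h1 h2 φ
    rw [abs_le]
    constructor
    · have := plb φ
      nlinarith [norm_nonneg φ, (abs_le.1 h2).1]
    · have := pub φ
      nlinarith [norm_nonneg φ, (abs_le.1 h1).2]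
  have hnorm1X : ‖(1 : C(X, ℝ))‖ = 1 := by simp
  have hnorm1Y : ‖(1 : C(Y, ℝ))‖ = 1 := by simp
  have hnormneg1Y : ‖(-1 : C(Y, ℝ))‖ = 1 := by simp
  refine ⟨⟨padd, phom, C, hCpos, ?_⟩, pmono, hpush1, hpushneg1, ?_⟩
  · intro φ
    refine habsbound C ?_ ?_ φ
    · have := hbd 1; rwa [hnorm1X, mul_one] at this
    · have := hbd (-1)
      have h : ‖(-1 : C(X, ℝ))‖ = 1 := by simp
      rwa [h, mul_one] at this
  · intro n hn
    obtain ⟨hn1, hn2⟩ := hn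
    have habs1 : |μ 1| ≤ n := by
      have := hn1 1; rwa [hnorm1X, mul_one] at this
    have habsneg1 : |μ (-1)| ≤ n := by
      have := hn1 (-1)
      have h : ‖(-1 : C(X, ℝ))‖ = 1 := by simp
      rwa [h, mul_one] at this
    constructor
    · intro φ
      exact habsbound n habs1 habsneg1 φ
    · intro C' hC'
      -- |μ 1| ≤ C' and |μ (-1)| ≤ C' via pushSM of ±1
      have e1 : |μ 1| ≤ C' := by
        have := hC' 1
        rwa [hpush1, hnorm1Y, mul_one] at this
      have e2 : |μ (-1)| ≤ C' := by
        have := hC' (-1)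
        rwa [hpushneg1, hnormneg1Y, mul_one] at this
      -- n ≤ max |μ 1| |μ (-1)| since the max bounds μ
      have hmaxmem : ∀ φ : C(X, ℝ), |μ φ| ≤ max |μ 1| |μ (-1)| * ‖φ‖ := by
        intro φ
        have hup : μ φ ≤ ‖φ‖ * μ 1 := by
          have h : φ ≤ ‖φ‖ • (1 : C(X, ℝ)) := by
            refine ContinuousMap.le_def.2 fun x => ?_
            have := φ.norm_coe_le_norm x
            rw [Real.norm_eq_abs] at this
            simpa using (abs_le.1 this).2
          calc μ φ ≤ μ (‖φ‖ • 1) := hmono h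
            _ = ‖φ‖ * μ 1 := hhom _ (norm_nonneg φ) 1
        have hlo : ‖φ‖ * μ (-1) ≤ μ φ := by
          have h : ‖φ‖ • (-1 : C(X, ℝ)) ≤ φ := by
            refine ContinuousMap.le_def.2 fun x => ?_
            have := φ.norm_coe_le_norm x
            rw [Real.norm_eq_abs] at this
            simpa using (abs_le.1 this).1
          calc ‖φ‖ * μ (-1) = μ (‖φ‖ • (-1)) := (hhom _ (norm_nonneg φ) (-1)).symm
            _ ≤ μ φ := hmono h
        rw [abs_le]
        constructor
        · nlinarith [norm_nonneg φ, neg_abs_le (μ (-1)), le_max_right |μ 1| |μ (-1)|,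
            abs_nonneg (μ 1)]
        · nlinarith [norm_nonneg φ, le_abs_self (μ 1), le_max_left |μ 1| |μ (-1)|,
            abs_nonneg (μ (-1))]
      have := hn2 hmaxmem
      calc n ≤ max |μ 1| |μ (-1)| := this
        _ ≤ C' := max_le e1 e2
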